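/- Almost every v ∈ V_{n,m} (with 1 ≤ m ≤ min(k, n-k)) can be written as v = [u₁ r^{1/2}; u₂ (I_m - r)^{1/2}] where u₁ ∈ V_{n-k,m}, u₂ ∈ V_{k,m}, and r ∈ S_m with 0 ≤ r ≤ I_m; explicitly, writing v = [a; b] with a the top (n-k)×m block and b the bottom k×m block, one has r = aᵀa, I_m - r = bᵀb, and whenever r and I_m - r are invertible, u₁ = a r^{-1/2} and u₂ = b (I_m - r)^{-1/2} are orthonormal frames. -/

import Mathlib

open Matrix

/- The positive semi-definite square root of a positive semi-definite matrix
(junk value `0` otherwise). -/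
open Classical in
noncomputable def psqrt {m : ℕ} (r : Matrix (Fin m) (Fin m) ℝ) : Matrix (Fin m) (Fin m) ℝ :=
  if h : r.PosSemidef then
    h.1.eigenvectorUnitary.1 * diagonal (Real.sqrt ∘ h.1.eigenvalues) *
      (star h.1.eigenvectorUnitary : Matrix (Fin m) (Fin m) ℝ) else 0

lemma psqrt_mul_self {m : ℕ} {r : Matrix (Fin m) (Fin m) ℝ} (h : r.PosSemidef) :
    psqrt r * psqrt r = r := by
  rw [psqrt, dif_pos h]
  have hU : (star h.1.eigenvectorUnitary.1 : Matrix (Fin m) (Fin m) ℝ) *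
      h.1.eigenvectorUnitary.1 = 1 := Unitary.star_mul_self_of_mem h.1.eigenvectorUnitary.2
  calc _ = h.1.eigenvectorUnitary.1 * (diagonal (Real.sqrt ∘ h.1.eigenvalues) *
        diagonal (Real.sqrt ∘ h.1.eigenvalues)) *
        (star h.1.eigenvectorUnitary : Matrix (Fin m) (Fin m) ℝ) := by
          simp only [Matrix.mul_assoc]
          rw [← Matrix.mul_assoc (star _) _, hU, Matrix.one_mul]
    _ = r := by
      rw [diagonal_mul_diagonal]
      conv_rhs => rw [h.1.spectral_theorem]
      rw [Unitary.conjStarAlgAut_apply]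
      congr 3
      ext i
      simp [Real.mul_self_sqrt (h.eigenvalues_nonneg i)]

lemma psqrt_transpose {m : ℕ} {r : Matrix (Fin m) (Fin m) ℝ} (h : r.PosSemidef) :
    (psqrt r)ᵀ = psqrt r := by
  rw [psqrt, dif_pos h]
  simp only [star_eq_conjTranspose, conjTranspose_eq_transpose_of_trivial, transpose_mul,
    diagonal_transpose, transpose_transpose, Matrix.mul_assoc]

lemma psqrt_isUnit_det {m : ℕ} {r : Matrix (Fin m) (Fin m) ℝ} (hs : r.PosSemidef)
    (h : r.PosDef) : IsUnit (psqrt r).det := by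
  have h1 : (psqrt r).det * (psqrt r).det = r.det := by
    rw [← det_mul, psqrt_mul_self hs]
  have h2 : r.det ≠ 0 := ne_of_gt h.det_pos
  exact isUnit_iff_ne_zero.2 fun hz => h2 (by rw [← h1, hz, mul_zero])

lemma frame_aux {m q : ℕ} {a : Matrix (Fin q) (Fin m) ℝ} {r : Matrix (Fin m) (Fin m) ℝ}
    (hr : aᵀ * a = r) (hs : r.PosSemidef) (hd : r.PosDef) :
    (a * (psqrt r)⁻¹)ᵀ * (a * (psqrt r)⁻¹) = 1 := by
  have hu := psqrt_isUnit_det hs hd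
  have hss := psqrt_mul_self hs
  have hst := psqrt_transpose hs
  set s := psqrt r with hsdef
  rw [transpose_mul, transpose_nonsing_inv, hst,
    Matrix.mul_assoc, ← Matrix.mul_assoc aᵀ, hr, ← hss,
    Matrix.mul_assoc s s s⁻¹, Matrix.mul_nonsing_inv _ hu,
    Matrix.mul_one, Matrix.nonsing_inv_mul _ hu]

/-- Bi-Stiefel coordinates on `V_{n,m}` (`n = p + k`, `p = n - k`,
`1 ≤ m ≤ min(k, p)`):  for `v ∈ V_{n,m}`, write `v = [a; b]` with top block
`a ∈ M_{p,m}` and bottom block `b ∈ M_{k,m}` and put `r = aᵀa`.  Then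
`0 ≤ r ≤ I_m` in the Loewner order, `I_m - r = bᵀb`, and whenever `r` and
`I_m - r` are invertible (which happens almost everywhere), `u₁ = a r^{-1/2}` and
`u₂ = b (I_m - r)^{-1/2}` are orthonormal frames, i.e. `u₁ ∈ V_{p,m}`,
`u₂ ∈ V_{k,m}`, and `v = [u₁ r^{1/2}; u₂ (I_m - r)^{1/2}]`. -/
theorem biStiefel_coordinates (p k m : ℕ) (hm : 1 ≤ m) (hmk : m ≤ k) (hmp : m ≤ p)
    (v : Matrix (Fin p ⊕ Fin k) (Fin m) ℝ)
    (hv : vᵀ * v = (1 : Matrix (Fin m) (Fin m) ℝ)) :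
    ((v.submatrix Sum.inl id)ᵀ * (v.submatrix Sum.inl id)).PosSemidef ∧
    (1 - (v.submatrix Sum.inl id)ᵀ * (v.submatrix Sum.inl id))
      = (v.submatrix Sum.inr id)ᵀ * (v.submatrix Sum.inr id) ∧
    (1 - (v.submatrix Sum.inl id)ᵀ * (v.submatrix Sum.inl id)).PosSemidef ∧
    (((v.submatrix Sum.inl id)ᵀ * (v.submatrix Sum.inl id)).PosDef →
      (1 - (v.submatrix Sum.inl id)ᵀ * (v.submatrix Sum.inl id)).PosDef →
      (v.submatrix Sum.inl id *
          (psqrt ((v.submatrix Sum.inl id)ᵀ * (v.submatrix Sum.inl id)))⁻¹)ᵀ *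
        (v.submatrix Sum.inl id *
          (psqrt ((v.submatrix Sum.inl id)ᵀ * (v.submatrix Sum.inl id)))⁻¹) = 1 ∧
      (v.submatrix Sum.inr id *
          (psqrt (1 - (v.submatrix Sum.inl id)ᵀ * (v.submatrix Sum.inl id)))⁻¹)ᵀ *
        (v.submatrix Sum.inr id *
          (psqrt (1 - (v.submatrix Sum.inl id)ᵀ * (v.submatrix Sum.inl id)))⁻¹) = 1 ∧
      v = Matrix.fromRows
        ((v.submatrix Sum.inl id *
            (psqrt ((v.submatrix Sum.inl id)ᵀ * (v.submatrix Sum.inl id)))⁻¹) *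
          psqrt ((v.submatrix Sum.inl id)ᵀ * (v.submatrix Sum.inl id)))
        ((v.submatrix Sum.inr id *
            (psqrt (1 - (v.submatrix Sum.inl id)ᵀ * (v.submatrix Sum.inl id)))⁻¹) *
          psqrt (1 - (v.submatrix Sum.inl id)ᵀ * (v.submatrix Sum.inl id)))) := by
  set a := v.submatrix Sum.inl id with ha
  set b := v.submatrix Sum.inr id with hb
  have hvab : v = fromRows a b := by
    ext (i | i) j <;> rfl
  have hsum : aᵀ * a + bᵀ * b = 1 := by
    rw [← hv, hvab, transpose_fromRows, fromCols_mul_fromRows]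
  have h1 : (aᵀ * a).PosSemidef := by
    have := posSemidef_conjTranspose_mul_self a
    simpa using this
  have h2 : 1 - aᵀ * a = bᵀ * b := by
    rw [← hsum]; abel
  have h3 : (1 - aᵀ * a).PosSemidef := by
    rw [h2]
    have := posSemidef_conjTranspose_mul_self b
    simpa using this
  refine ⟨h1, h2, h3, fun hd1 hd2 => ?_⟩
  refine ⟨frame_aux rfl h1 hd1, frame_aux h2.symm h3 hd2, ?_⟩
  have hu1 := psqrt_isUnit_det h1 hd1
  have hu2 := psqrt_isUnit_det h3 hd2
  rw [Matrix.mul_assoc, Matrix.mul_assoc, Matrix.nonsing_inv_mul _ hu1,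
    Matrix.nonsing_inv_mul _ hu2, Matrix.mul_one, Matrix.mul_one]
  exact hvab
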